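/- Let F̃ and R̃ be the forward and reverse ringing-path maps on pairs (D, i), where D is a bosonic multiline queue of type (λ,n) with L = λ_1 rows and i ∈ ℤ_n. Then R̃(F̃(D,i)) = (D,i) and F̃(R̃(D,i)) = (D,i). -/
import Mathlib


/-- Forward ringing path on a bosonic multiline queue (rows indexed from `0`):
`bfPath D i j = 𝔞_{j+1}`, with `𝔞_1 = i` and `𝔞_{j+1} = 𝔞_j` if `𝔞_j ∉ D_j`,
otherwise `𝔞_j + 1` (mod `n`). -/
def bfPath {n : ℕ} (D : ℕ → Multiset (ZMod n)) (i : ZMod n) : ℕ → ZMod n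
  | 0 => i
  | j + 1 => if bfPath D i j ∈ D j then bfPath D i j + 1 else bfPath D i j

/-- Forward ringing transition `F̃(D, i) = (D', 𝔞_{L+1} − 1)`: in each row `j` with
`𝔞_j ∈ D_j`, one particle hops from site `𝔞_j` to site `𝔞_j + 1`. -/
def bF {n : ℕ} (L : ℕ) (D : ℕ → Multiset (ZMod n)) (i : ZMod n) :
    (ℕ → Multiset (ZMod n)) × ZMod n :=
  (fun j =>
    if j < L then
      (if bfPath D i j ∈ D j then (bfPath D i j + 1) ::ₘ (D j).erase (bfPath D i j) else D j)
    else D j,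
   bfPath D i L - 1)

/-- Reverse ringing path: `brPath L D i t = 𝔟_{L−t}`, with `𝔟_L = i` and
`𝔟_j = 𝔟_{j+1}` if `𝔟_{j+1} + 1 ∉ D_{j+1}`, else `𝔟_{j+1} − 1`
(rows `1, …, L` of the paper are indexed `0, …, L-1` here). -/
def brPath {n : ℕ} (L : ℕ) (D : ℕ → Multiset (ZMod n)) (i : ZMod n) : ℕ → ZMod n
  | 0 => i
  | t + 1 =>
    if brPath L D i t + 1 ∈ D (L - 1 - t) then brPath L D i t - 1 else brPath L D i t

/-- Reverse ringing transition `R̃(D, i) = (D'', 𝔟_0 + 1)`: in each row `j` with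
`𝔟_j + 1 ∈ D_j`, one particle hops from site `𝔟_j + 1` to site `𝔟_j`. -/
def bR {n : ℕ} (L : ℕ) (D : ℕ → Multiset (ZMod n)) (i : ZMod n) :
    (ℕ → Multiset (ZMod n)) × ZMod n :=
  (fun j =>
    if j < L then
      (let b := brPath L D i (L - 1 - j);
       if b + 1 ∈ D j then b ::ₘ (D j).erase (b + 1) else D j)
    else D j,
   brPath L D i L + 1)

/-- Total number of particles at site `s` (summed over all `L` rows). -/
def colCount {n : ℕ} (L : ℕ) (D : ℕ → Multiset (ZMod n)) (s : ZMod n) : ℕ :=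
  ∑ t ∈ Finset.range L, (D t).count s

/-- Column `s` of `D` is empty: no row contains site `s`. -/
def colEmpty {n : ℕ} (L : ℕ) (D : ℕ → Multiset (ZMod n)) (s : ZMod n) : Prop :=
  ∀ t, t < L → s ∉ D t

/-- the forward and reverse ringing-path maps on bosonic multiline queues
(of type `(λ,n)` with `L = λ_1` rows; rows beyond `L` empty) are mutually inverse:
`R̃(F̃(D,i)) = (D,i)` and `F̃(R̃(D,i)) = (D,i)`. -/
lemma fr_path (n L : ℕ) (D : ℕ → Multiset (ZMod n)) (i : ZMod n) :
    ∀ t, t ≤ L → brPath L (bF L D i).1 (bfPath D i L - 1) t = bfPath D i (L - t) - 1 := by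
  intro t
  induction t with
  | zero => intro _; simp [brPath]
  | succ t ih =>
    intro ht
    have ht' : t ≤ L := Nat.le_of_succ_le ht
    have hlt : t < L := ht
    rw [brPath, ih ht']
    have hj : L - t = (L - 1 - t) + 1 := by omega
    set j := L - 1 - t with hjdef
    have hjL : j < L := by omega
    have hLt1 : L - (t + 1) = j := by omega
    rw [hj, hLt1, sub_add_cancel]
    by_cases h : bfPath D i j ∈ D j
    · have ha : bfPath D i (j + 1) = bfPath D i j + 1 := by rw [bfPath]; simp [h]
      have hmem : bfPath D i (j + 1) ∈ (bF L D i).1 j := by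
        simp [bF, hjL, h, ha]
      rw [if_pos hmem, ha]
      ring
    · have ha : bfPath D i (j + 1) = bfPath D i j := by rw [bfPath]; simp [h]
      have hD' : (bF L D i).1 j = D j := by simp [bF, hjL, h]
      rw [hD', ha, if_neg h]

lemma rf_path (n L : ℕ) (D : ℕ → Multiset (ZMod n)) (i : ZMod n) :
    ∀ j, j ≤ L → bfPath (bR L D i).1 (brPath L D i L + 1) j = brPath L D i (L - j) + 1 := by
  intro j
  induction j with
  | zero => intro _; simp [bfPath]
  | succ j ih =>
    intro hj
    have hj' : j ≤ L := Nat.le_of_succ_le hj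
    have hlt : j < L := hj
    have ht : L - j = (L - 1 - j) + 1 := by omega
    have hrow : L - 1 - (L - 1 - j) = j := by omega
    have hLj1 : L - (j + 1) = L - 1 - j := by omega
    rw [bfPath, ih hj', ht, brPath, hrow, hLj1]
    set c := brPath L D i (L - 1 - j) with hc
    by_cases h : c + 1 ∈ D j
    · rw [if_pos h, sub_add_cancel]
      have hD'' : (bR L D i).1 j = c ::ₘ (D j).erase (c + 1) := by
        simp [bR, hlt, ← hc, h]
      rw [hD'', if_pos (Multiset.mem_cons_self _ _)]
    · rw [if_neg h]
      have hD'' : (bR L D i).1 j = D j := by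
        simp [bR, hlt, ← hc, h]
      rw [hD'', if_neg h]

theorem bosonic_ringing_inverse (n L : ℕ) (D : ℕ → Multiset (ZMod n))
    (hbeyond : ∀ j, L ≤ j → D j = 0) (i : ZMod n) :
    bR L (bF L D i).1 (bF L D i).2 = (D, i) ∧ bF L (bR L D i).1 (bR L D i).2 = (D, i) := by
  constructor
  · apply Prod.ext
    · funext j
      by_cases hjL : j < L
      · show (bR L (bF L D i).1 (bF L D i).2).1 j = D j
        have hb : brPath L (bF L D i).1 (bF L D i).2 (L - 1 - j)
            = bfPath D i (j + 1) - 1 := by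
          have := fr_path n L D i (L - 1 - j) (by omega)
          have hL : L - (L - 1 - j) = j + 1 := by omega
          rw [hL] at this
          exact this
        by_cases h : bfPath D i j ∈ D j
        · have ha : bfPath D i (j + 1) = bfPath D i j + 1 := by rw [bfPath]; simp [h]
          have hD' : (bF L D i).1 j = (bfPath D i j + 1) ::ₘ (D j).erase (bfPath D i j) := by
            simp [bF, hjL, h]
          simp only [bR, hjL, if_pos hjL, hb, ha, hD']
          rw [sub_add_cancel]
          rw [if_pos (Multiset.mem_cons_self _ _)]
          rw [Multiset.erase_cons_head]
          rw [add_sub_cancel_right, Multiset.cons_erase h]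
          simp
        · have ha : bfPath D i (j + 1) = bfPath D i j := by rw [bfPath]; simp [h]
          have hD' : (bF L D i).1 j = D j := by simp [bF, hjL, h]
          simp only [bR, hjL, if_pos hjL, hb, ha, hD']
          rw [sub_add_cancel, if_neg h]
          simp
      · simp [bR, bF, hjL]
    · show brPath L (bF L D i).1 (bF L D i).2 L + 1 = i
      have h2 : brPath L (bF L D i).1 (bF L D i).2 L = i - 1 := by
        have := fr_path n L D i L le_rfl
        rw [Nat.sub_self] at this
        exact this
      rw [h2, sub_add_cancel]
  · apply Prod.ext
    · funext j
      by_cases hjL : j < L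
      · show (bF L (bR L D i).1 (bR L D i).2).1 j = D j
        have ha : bfPath (bR L D i).1 (bR L D i).2 j = brPath L D i (L - j) + 1 :=
          rf_path n L D i j (le_of_lt hjL)
        have ht : L - j = (L - 1 - j) + 1 := by omega
        have hrow : L - 1 - (L - 1 - j) = j := by omega
        rw [ht, brPath, hrow] at ha
        set c := brPath L D i (L - 1 - j) with hc
        by_cases h : c + 1 ∈ D j
        · rw [if_pos h, sub_add_cancel] at ha
          have hD'' : (bR L D i).1 j = c ::ₘ (D j).erase (c + 1) := by
            simp [bR, hjL, ← hc, h]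
          simp only [bF, if_pos hjL, ha, hD'']
          rw [if_pos (Multiset.mem_cons_self _ _), Multiset.erase_cons_head,
            Multiset.cons_erase h]
        · rw [if_neg h] at ha
          have hD'' : (bR L D i).1 j = D j := by
            simp [bR, hjL, ← hc, h]
          simp only [bF, if_pos hjL, ha, hD'']
          rw [if_neg h]
      · simp [bR, bF, hjL]
    · show bfPath (bR L D i).1 (bR L D i).2 L - 1 = i
      have h2 : bfPath (bR L D i).1 (bR L D i).2 L = i + 1 := by
        have := rf_path n L D i L le_rfl
        rw [Nat.sub_self] at this
        exact this
      rw [h2, add_sub_cancel_right]
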